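/- In the graph G_d, no vertex of the path P_d is contained in a triangle. -/

import Mathlib

open SimpleGraph

/-- Sorted list of the tuple set `S^d`: tuples with entries in {1,3} except
the last entry which is in {1,2,3,4}, of length between 1 and `d`,
listed in lexicographic order. -/
def Tl : ℕ → List (List ℕ)
  | 0 => []
  | k+1 => [[1]] ++ (Tl k).map (fun a => 1 :: a) ++ [[2], [3]]
            ++ (Tl k).map (fun a => 3 :: a) ++ [[4]]

/-- Strict lexicographic order on tuples (a proper prefix is smaller). -/
def lexLt (a b : List ℕ) : Prop := List.Lex (· < ·) a b

def lexLe (a b : List ℕ) : Prop := a = b ∨ lexLt a b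

/-- `v` is the successor of `u` in the lexicographic order on `S^d`. -/
def IsSucc (d : ℕ) (u v : List ℕ) : Prop :=
  v ∈ Tl d ∧ lexLt u v ∧ ∀ w ∈ Tl d, lexLt u w → lexLe v w

/-- The interval `[a,b]` in `S^d`. -/
def interval (d : ℕ) (a b : List ℕ) : Set (List ℕ) :=
  {c | c ∈ Tl d ∧ lexLe a c ∧ lexLe c b}

/-- `[a,b]` is a proper interval: no interior element has length `l(a)` or `l(b)`. -/
def ProperInterval (d : ℕ) (a b : List ℕ) : Prop :=
  a ∈ Tl d ∧ b ∈ Tl d ∧ lexLe a b ∧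
  ∀ c ∈ interval d a b, c ≠ a → c ≠ b →
    c.length ≠ a.length ∧ c.length ≠ b.length

/-- The set of left endpoints of flat steps of the interval `[a,b]`. -/
def flatSteps (d : ℕ) (a b : List ℕ) : Set (List ℕ) :=
  {c | c ∈ Tl d ∧ lexLe a c ∧ lexLt c b ∧ ∃ v, IsSucc d c v ∧ v.length = c.length}

/-- Vertices of `G_d`: elements of `S^d`, subdivision vertices, and centers. -/
inductive Vtx where
  | elt : List ℕ → Vtx
  | sub : ℕ → Fin 2 → Vtx
  | ctr : ℕ → Vtx
deriving DecidableEq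

/-- The path `P_d` as a list of vertices: the elements of `S^d` in order,
with two subdivision vertices between consecutive elements of equal length
and one otherwise. -/
def pathList (d : ℕ) : List Vtx :=
  (((Tl d).zipIdx).map Prod.swap).flatMap (fun p =>
    Vtx.elt p.2 :: (match (Tl d)[p.1 + 1]? with
      | none => []
      | some b =>
        if p.2.length = b.length then [Vtx.sub p.1 0, Vtx.sub p.1 1]
        else [Vtx.sub p.1 0]))

/-- `x` and `y` are consecutive in the list `l`. -/
def ChainAdj {α : Type} (l : List α) (x y : α) : Prop :=
  ∃ i, (l[i]? = some x ∧ l[i+1]? = some y) ∨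
       (l[i]? = some y ∧ l[i+1]? = some x)

/-- Adjacency from a center vertex. -/
def ctrAdj (d : ℕ) : Vtx → Vtx → Prop
  | Vtx.ctr k, Vtx.ctr m => k ≠ m ∧ 1 ≤ k ∧ k ≤ d ∧ 1 ≤ m ∧ m ≤ d
  | Vtx.ctr k, Vtx.elt a => 1 ≤ k ∧ k ≤ d ∧ a ∈ Tl d ∧ a.length = k
  | _, _ => False

/-- The vertex set of `G_d`. -/
def VSet (d : ℕ) : Finset Vtx :=
  (pathList d).toFinset ∪ (Finset.Icc 1 d).image Vtx.ctr

def GdAdj (d : ℕ) (x y : Vtx) : Prop :=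
  x ≠ y ∧ (ChainAdj (pathList d) x y ∨ ctrAdj d x y ∨ ctrAdj d y x)

/-- The graph `G_d`. -/
def Gd (d : ℕ) : SimpleGraph {x // x ∈ VSet d} where
  Adj x y := GdAdj d x.1 y.1
  symm := ⟨by
    rintro x y ⟨hne, h⟩
    refine ⟨hne.symm, ?_⟩
    rcases h with ⟨i, hi⟩ | h | h
    · exact Or.inl ⟨i, hi.symm⟩
    · exact Or.inr (Or.inr h)
    · exact Or.inr (Or.inl h)⟩
  loopless := ⟨fun x h => h.1 rfl⟩

/-- A rank decomposition of a graph `G`: a finite cubic tree together with a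
bijection from the vertices of `G` to the leaves of the tree. -/
structure RankDecomp {V : Type} [Fintype V] (G : SimpleGraph V) where
  t : Type
  fin : Fintype t
  tree : SimpleGraph t
  conn : tree.Connected
  acyc : tree.IsAcyclic
  two_le : 2 ≤ Nat.card t
  cubic : ∀ v : t, (tree.neighborSet v).ncard = 1 ∨ (tree.neighborSet v).ncard = 3
  leafEquiv : V ≃ {v : t // (tree.neighborSet v).ncard = 1}

/-- The set of vertices of `G` whose leaf lies on the side of `a` of
the edge `ab` of the decomposition tree. -/
def RankDecomp.side {V : Type} [Fintype V] {G : SimpleGraph V}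
    (D : RankDecomp G) (a b : D.t) : Set V :=
  {x | (D.tree.deleteEdges {s(a, b)}).Reachable (D.leafEquiv x).1 a}

/-- The cutrank function of `G`: the GF(2)-rank of the adjacency submatrix
between `X` and its complement. -/
noncomputable def cutRank {V : Type} [Fintype V] (G : SimpleGraph V) (X : Set V) : ℕ :=
  haveI : Fintype ↥X := Fintype.ofFinite _
  haveI : Fintype ↥(Xᶜ) := Fintype.ofFinite _
  haveI : DecidableRel G.Adj := Classical.decRel _
  Matrix.rank (Matrix.of (fun (x : ↥X) (y : ↥(Xᶜ)) =>
    if G.Adj x.1 y.1 then (1 : ZMod 2) else 0))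

/-- The decomposition `D` has width at most `k`. -/
def RankDecomp.WidthLE {V : Type} [Fintype V] {G : SimpleGraph V}
    (D : RankDecomp G) (k : ℕ) : Prop :=
  ∀ a b : D.t, D.tree.Adj a b → cutRank G (D.side a b) ≤ k

/-- The rank-width of `G`. -/
noncomputable def rankwidth {V : Type} [Fintype V] (G : SimpleGraph V) : ℕ :=
  sInf {k | ∃ D : RankDecomp G, D.WidthLE k}

/-- `l` is an induced path in `G`: its vertices are distinct and two of them
are adjacent in `G` iff they are consecutive on `l`. -/
def IsInducedPathList {V : Type} (G : SimpleGraph V) (l : List V) : Prop :=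
  l.Nodup ∧ ∀ x ∈ l, ∀ y ∈ l, (G.Adj x y ↔ ChainAdj l x y)

/-- The diamond: the complete graph on four vertices minus an edge. -/
def diamond : SimpleGraph (Fin 4) := (⊤ : SimpleGraph (Fin 4)).deleteEdges {s(2, 3)}

namespace Stmt11Aux

lemma tl_ne_nil {d : ℕ} : ∀ a ∈ Tl d, a ≠ [] := by
  induction d with
  | zero => simp [Tl]
  | succ k ih =>
    rintro a ha rfl
    simp only [Tl, List.mem_append, List.mem_map, List.mem_cons, List.mem_singleton,
      List.not_mem_nil] at ha
    simp at ha

lemma tl_nodup (d : ℕ) : (Tl d).Nodup := by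
  induction d with
  | zero => simp [Tl]
  | succ k ih =>
    have hne := @tl_ne_nil k
    have hnil : [] ∉ Tl k := fun h => hne [] h rfl
    have h1 : ((Tl k).map (fun a => 1 :: a)).Nodup :=
      ih.map (fun a b h => by simpa using h)
    have h3 : ((Tl k).map (fun a => 3 :: a)).Nodup :=
      ih.map (fun a b h => by simpa using h)
    simp only [Tl, List.nodup_append, List.disjoint_append_left, List.disjoint_append_right,
      List.nodup_cons, List.nodup_nil, List.mem_cons, List.mem_singleton, List.not_mem_nil]
    repeat' apply And.intro
    all_goals first
      | exact h1
      | exact h3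
      | simp [List.disjoint_left]
      | (simp only [List.disjoint_left, List.mem_map, List.mem_singleton, List.mem_cons,
          forall_exists_index, and_imp]
         rintro x b hb rfl h
         first
           | (rcases h with h | h <;> simp_all)
           | simp_all)
      | exact hnil
      | exact hne
    all_goals first
      | exact hnil
      | (intro x hx; exact hne x hx)
      | (intro x hx a ha hxa; subst hxa; simp_all)
      | (intro x hx hx4; subst hx4; simp at hx)

def sblock (a : List ℕ) (i : ℕ) : Option (List ℕ) → List Vtx
  | none => []
  | some b => if a.length = b.length then [Vtx.sub i 0, Vtx.sub i 1] else [Vtx.sub i 0]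

def paux : ℕ → List (List ℕ) → List Vtx
  | _, [] => []
  | i, a :: t => Vtx.elt a :: (sblock a i t.head? ++ paux (i + 1) t)

lemma flat_eq : ∀ (l : List (List ℕ)) (i : ℕ),
    (((l.zipIdx i).map Prod.swap).flatMap fun p => Vtx.elt p.2 :: sblock p.2 p.1 (l[p.1 + 1 - i]?))
      = paux i l
  | [], i => by simp [paux]
  | a :: t, i => by
    simp only [List.zipIdx_cons, List.map_cons, List.flatMap_cons, Prod.swap_prod_mk]
    have h0 : (a :: t)[i + 1 - i]? = t.head? := by
      rw [Nat.add_sub_cancel_left]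
      cases t <;> rfl
    rw [h0, paux, List.cons_append]
    congr 1
    congr 1
    rw [← flat_eq t (i + 1)]
    apply List.flatMap_congr
    rintro ⟨n, b⟩ hm
    obtain ⟨⟨b', n'⟩, hm', he⟩ := List.mem_map.mp hm
    simp only [Prod.swap_prod_mk, Prod.mk.injEq] at he
    replace hm : (b, n) ∈ t.zipIdx (i + 1) := by rw [← he.1, ← he.2]; exact hm'
    rw [List.mk_mem_zipIdx_iff_le_and_getElem?_sub] at hm
    have hni : i + 1 ≤ n := hm.1
    have e1 : n + 1 - i = (n + 1 - (i + 1)) + 1 := by omega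
    rw [e1, List.getElem?_cons_succ]

lemma pathList_eq (d : ℕ) : pathList d = paux 0 (Tl d) := by
  rw [← flat_eq (Tl d) 0]
  unfold pathList
  apply List.flatMap_congr
  rintro ⟨n, b⟩ hm
  simp only [Nat.sub_zero]
  cases h : (Tl d)[n + 1]? <;> simp [sblock, h]

lemma mem_sblock {a : List ℕ} {i : ℕ} {o : Option (List ℕ)} {x : Vtx}
    (hx : x ∈ sblock a i o) : ∃ c : Fin 2, x = Vtx.sub i c := by
  cases o with
  | none => simp [sblock] at hx
  | some b =>
    by_cases h : a.length = b.length <;> simp [sblock, h] at hx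
    · rcases hx with rfl | rfl
      exacts [⟨0, rfl⟩, ⟨1, rfl⟩]
    · exact ⟨0, hx⟩

lemma mem_paux : ∀ {i : ℕ} {l : List (List ℕ)} {x : Vtx}, x ∈ paux i l →
    (∃ a ∈ l, x = Vtx.elt a) ∨ (∃ j c, i ≤ j ∧ x = Vtx.sub j c)
  | i, [], x => by simp [paux]
  | i, a :: t, x => by
    intro hx
    simp only [paux, List.mem_cons, List.mem_append] at hx
    rcases hx with rfl | hx | hx
    · exact Or.inl ⟨a, by simp, rfl⟩
    · obtain ⟨c, rfl⟩ := mem_sblock hx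
      exact Or.inr ⟨i, c, le_refl i, rfl⟩
    · rcases mem_paux hx with ⟨b, hb, rfl⟩ | ⟨j, c, hj, rfl⟩
      · exact Or.inl ⟨b, by simp [hb], rfl⟩
      · exact Or.inr ⟨j, c, by omega, rfl⟩

lemma sblock_nodup (a : List ℕ) (i : ℕ) (o : Option (List ℕ)) : (sblock a i o).Nodup := by
  cases o with
  | none => simp [sblock]
  | some b => by_cases h : a.length = b.length <;> simp [sblock, h]

lemma paux_nodup : ∀ {i : ℕ} {l : List (List ℕ)}, l.Nodup → (paux i l).Nodup
  | i, [], _ => by simp [paux]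
  | i, a :: t, h => by
    obtain ⟨ha, ht⟩ := List.nodup_cons.mp h
    have ih := paux_nodup (i := i + 1) ht
    rw [paux, List.nodup_cons, List.nodup_append]
    refine ⟨?_, sblock_nodup a i t.head?, ih, ?_⟩
    · intro hmem
      rcases List.mem_append.mp hmem with hm | hm
      · obtain ⟨c, hc⟩ := mem_sblock hm; cases hc
      · rcases mem_paux hm with ⟨b, hb, he⟩ | ⟨j, c, _, he⟩
        · cases he; exact ha hb
        · cases he
    · intro x hxs y hxp hxy
      subst hxy
      obtain ⟨c, rfl⟩ := mem_sblock hxs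
      rcases mem_paux hxp with ⟨b, _, he⟩ | ⟨j, c', hj, he⟩
      · cases he
      · cases he; omega


def RNE : Vtx → Vtx → Prop := fun u v => (∀ a, u ≠ Vtx.elt a) ∨ (∀ a, v ≠ Vtx.elt a)

lemma paux_chain : ∀ (l : List (List ℕ)) (i : ℕ), List.Chain' RNE (paux i l)
  | [], i => by simp [paux]; exact List.isChain_nil
  | [a], i => by simp [paux, sblock]; exact List.isChain_singleton _
  | a :: b :: t, i => by
    have ih := paux_chain (b :: t) (i + 1)
    have hb : paux (i + 1) (b :: t)
        = Vtx.elt b :: (sblock b (i + 1) t.head? ++ paux (i + 2) t) := rfl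
    have hsub : ∀ (j : ℕ) (c : Fin 2) (v : Vtx), RNE (Vtx.sub j c) v :=
      fun j c v => Or.inl (fun a h => by cases h)
    show List.Chain' RNE (Vtx.elt a :: (sblock a i (some b) ++ paux (i + 1) (b :: t)))
    by_cases h : a.length = b.length
    · simp only [sblock, if_pos h, List.cons_append, List.nil_append]
      refine List.isChain_cons_cons.mpr ⟨Or.inr (fun c hc => by cases hc), ?_⟩
      refine List.isChain_cons_cons.mpr ⟨hsub _ _ _, ?_⟩
      rw [hb]
      refine List.isChain_cons_cons.mpr ⟨hsub _ _ _, ?_⟩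
      rw [← hb]; exact ih
    · simp only [sblock, if_neg h, List.cons_append, List.nil_append]
      refine List.isChain_cons_cons.mpr ⟨Or.inr (fun c hc => by cases hc), ?_⟩
      rw [hb]
      refine List.isChain_cons_cons.mpr ⟨hsub _ _ _, ?_⟩
      rw [← hb]; exact ih

lemma pathList_chain (d : ℕ) : List.Chain' RNE (pathList d) := by
  rw [pathList_eq]; exact paux_chain _ _

lemma pathList_nodup (d : ℕ) : (pathList d).Nodup := by
  rw [pathList_eq]; exact paux_nodup (tl_nodup d)

lemma ctr_not_mem_pathList {d k : ℕ} : Vtx.ctr k ∉ pathList d := by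
  rw [pathList_eq]
  intro h
  rcases mem_paux h with ⟨a, _, he⟩ | ⟨j, c, _, he⟩ <;> cases he

lemma chainAdj_mem {α : Type} {l : List α} {x y : α} (h : ChainAdj l x y) :
    x ∈ l ∧ y ∈ l := by
  obtain ⟨i, ⟨h1, h2⟩ | ⟨h1, h2⟩⟩ := h
  · exact ⟨List.mem_of_getElem? h1, List.mem_of_getElem? h2⟩
  · exact ⟨List.mem_of_getElem? h2, List.mem_of_getElem? h1⟩

lemma not_chainAdj_elt_elt {d : ℕ} {a b : List ℕ} :
    ¬ ChainAdj (pathList d) (Vtx.elt a) (Vtx.elt b) := by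
  rintro ⟨i, h⟩
  have hc := List.isChain_iff_getElem.mp (pathList_chain d)
  have key : ∀ u v : Vtx, (pathList d)[i]? = some u →
      (pathList d)[i + 1]? = some v → RNE u v := by
    intro u v h1 h2
    obtain ⟨hlt2, hg2⟩ := List.getElem?_eq_some_iff.mp h2
    obtain ⟨hlt1, hg1⟩ := List.getElem?_eq_some_iff.mp h1
    have := hc i (by omega)
    rw [hg1, hg2] at this
    exact this
  rcases h with ⟨h1, h2⟩ | ⟨h1, h2⟩
  · rcases key _ _ h1 h2 with h | h
    exacts [h a rfl, h b rfl]
  · rcases key _ _ h1 h2 with h | h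
    exacts [h b rfl, h a rfl]

lemma chainAdj_pos {α : Type} {l : List α} {x y : α} (h : ChainAdj l x y) :
    ∃ p q, l[p]? = some x ∧ l[q]? = some y ∧ (q = p + 1 ∨ p = q + 1) := by
  obtain ⟨i, ⟨h1, h2⟩ | ⟨h1, h2⟩⟩ := h
  · exact ⟨i, i + 1, h1, h2, Or.inl rfl⟩
  · exact ⟨i + 1, i, h2, h1, Or.inr rfl⟩

lemma chainAdj_triangle {α : Type} {l : List α} (hn : l.Nodup) {x y z : α}
    (h1 : ChainAdj l x y) (h2 : ChainAdj l x z) (h3 : ChainAdj l y z) : False := by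
  obtain ⟨p1, q1, hx1, hy1, hr1⟩ := chainAdj_pos h1
  obtain ⟨p2, q2, hx2, hz2, hr2⟩ := chainAdj_pos h2
  obtain ⟨p3, q3, hy3, hz3, hr3⟩ := chainAdj_pos h3
  have e1 : p1 = p2 :=
    (List.getElem?_inj (List.getElem?_eq_some_iff.mp hx1).1 hn).mp (hx1.trans hx2.symm)
  have e2 : q1 = p3 :=
    (List.getElem?_inj (List.getElem?_eq_some_iff.mp hy1).1 hn).mp (hy1.trans hy3.symm)
  have e3 : q2 = q3 :=
    (List.getElem?_inj (List.getElem?_eq_some_iff.mp hz2).1 hn).mp (hz2.trans hz3.symm)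
  omega

lemma ctrAdj_left {d : ℕ} {u v : Vtx} (h : ctrAdj d u v) : ∃ k, u = Vtx.ctr k := by
  cases u with
  | ctr k => exact ⟨k, rfl⟩
  | elt a => cases v <;> exact h.elim
  | sub j c => cases v <;> exact h.elim

lemma ctrAdj_ctr_elim {d k : ℕ} {v : Vtx} (h : ctrAdj d (Vtx.ctr k) v) :
    (∃ m, v = Vtx.ctr m ∧ k ≠ m) ∨ (∃ a, v = Vtx.elt a ∧ a.length = k) := by
  cases v with
  | ctr m => exact Or.inl ⟨m, rfl, h.1⟩
  | elt a => exact Or.inr ⟨a, rfl, h.2.2.2⟩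
  | sub j c => exact h.elim

lemma gdAdj_ctr {d : ℕ} {u : Vtx} {k : ℕ} (hu : ∀ j, u ≠ Vtx.ctr j)
    (h : GdAdj d u (Vtx.ctr k)) : ∃ a, u = Vtx.elt a ∧ a.length = k := by
  rcases h.2 with hc | hc | hc
  · exact absurd (chainAdj_mem hc).2 ctr_not_mem_pathList
  · obtain ⟨m, rfl⟩ := ctrAdj_left hc
    exact absurd rfl (hu m)
  · rcases ctrAdj_ctr_elim hc with ⟨m, rfl, _⟩ | ⟨a, rfl, hl⟩
    · exact absurd rfl (hu m)
    · exact ⟨a, rfl, hl⟩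

lemma gdAdj_chain {d : ℕ} {u v : Vtx} (hu : ∀ j, u ≠ Vtx.ctr j) (hv : ∀ j, v ≠ Vtx.ctr j)
    (h : GdAdj d u v) : ChainAdj (pathList d) u v := by
  rcases h.2 with hc | hc | hc
  · exact hc
  · obtain ⟨m, rfl⟩ := ctrAdj_left hc
    exact absurd rfl (hu m)
  · obtain ⟨m, rfl⟩ := ctrAdj_left hc
    exact absurd rfl (hv m)

lemma gdAdj_symm {d : ℕ} {u v : Vtx} (h : GdAdj d u v) : GdAdj d v u := by
  refine ⟨h.1.symm, ?_⟩
  rcases h.2 with ⟨i, hi⟩ | hc | hc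
  · exact Or.inl ⟨i, hi.symm⟩
  · exact Or.inr (Or.inr hc)
  · exact Or.inr (Or.inl hc)

end Stmt11Aux

open Stmt11Aux in
/-- In `G_d`, no vertex of the path `P_d` lies in a triangle. -/
theorem stmt11 (d : ℕ) (x : Vtx) (hx : x ∈ pathList d) (hx' : x ∈ VSet d) :
    ¬ ∃ y z : {v // v ∈ VSet d},
      (Gd d).Adj ⟨x, hx'⟩ y ∧ (Gd d).Adj ⟨x, hx'⟩ z ∧ (Gd d).Adj y z := by
  rintro ⟨⟨y, hy⟩, ⟨z, hz⟩, hxy, hxz, hyz⟩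
  have hxy : GdAdj d x y := hxy
  have hxz : GdAdj d x z := hxz
  have hyz : GdAdj d y z := hyz
  have hxc : ∀ j, x ≠ Vtx.ctr j := fun j hj => ctr_not_mem_pathList (hj ▸ hx)
  by_cases hyc' : ∃ k, y = Vtx.ctr k
  · obtain ⟨k, rfl⟩ := hyc'
    obtain ⟨a, rfl, hak⟩ := gdAdj_ctr hxc hxy
    by_cases hzc' : ∃ m, z = Vtx.ctr m
    · obtain ⟨m, rfl⟩ := hzc'
      obtain ⟨a', ha', ham⟩ := gdAdj_ctr hxc hxz
      have hkm : k ≠ m := by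
        rcases hyz.2 with hc | hc | hc
        · exact absurd (chainAdj_mem hc).1 ctr_not_mem_pathList
        · exact hc.1
        · exact hc.1.symm
      have he : a = a' := by injection ha'
      rw [← he] at ham
      omega
    · have hzc : ∀ j, z ≠ Vtx.ctr j := by push_neg at hzc'; exact hzc'
      obtain ⟨b, rfl, hbk⟩ := gdAdj_ctr hzc (gdAdj_symm hyz)
      exact not_chainAdj_elt_elt (gdAdj_chain hxc (fun j h => by cases h) hxz)
  · by_cases hzc' : ∃ m, z = Vtx.ctr m
    · obtain ⟨m, rfl⟩ := hzc'
      have hyc : ∀ j, y ≠ Vtx.ctr j := by push_neg at hyc'; exact hyc'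
      obtain ⟨a, rfl, ham⟩ := gdAdj_ctr hxc hxz
      obtain ⟨b, rfl, hbm⟩ := gdAdj_ctr hyc hyz
      exact not_chainAdj_elt_elt (gdAdj_chain hxc (fun j h => by cases h) hxy)
    · have hyc : ∀ j, y ≠ Vtx.ctr j := by push_neg at hyc'; exact hyc'
      have hzc : ∀ j, z ≠ Vtx.ctr j := by push_neg at hzc'; exact hzc'
      exact chainAdj_triangle (pathList_nodup d)
        (gdAdj_chain hxc hyc hxy) (gdAdj_chain hxc hzc hxz) (gdAdj_chain hyc hzc hyz)
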